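/- On the incidence chart: fix indices i, j and consider s_{i,j}(a, b) = ((a⁰,…,a^{i-1},1,a^{i+1},…,a^{n+1}), (b⁰,…,b^{j-1},1,b^{j+1},…,b^{n+1})) restricted to the set where the pairing vanishes. The pullback s_{i,j}^* ω of the 1-form ω = Σ_{k} (x^k dy^k - y^k dx^k) is a contact form, i.e., s_{i,j}^*(ω ∧ (dω)^{∧n}) is nonvanishing, at every point of the chart where it is defined with x^i ≠ 0 and y^j ≠ 0. -/

import Mathlib

open Matrix

/-- Key linear algebra lemma: if `v ≠ 0` lies in the hyperplane `{v i = 0}` and is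
    orthogonal to `b`, then there is `w` with `w j = 0`, `a ⬝ᵥ w = 0` and `v ⬝ᵥ w ≠ 0`. -/
private lemma key_lemma (n : ℕ) (i j : Fin (n+2)) (a b v : Fin (n+2) → ℝ)
    (hai : a i = 1) (hbj : b j = 1) (hab : a ⬝ᵥ b = 0)
    (hvi : v i = 0) (hbv : b ⬝ᵥ v = 0) (hv : v ≠ 0) :
    ∃ w, w j = 0 ∧ a ⬝ᵥ w = 0 ∧ v ⬝ᵥ w ≠ 0 := by
  by_contra h
  push_neg at h
  -- h : ∀ w, w j = 0 → a ⬝ᵥ w = 0 → v ⬝ᵥ w = 0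
  rcases eq_or_ne i j with hij | hij
  · -- case i = j
    subst hij
    -- first: a ⬝ᵥ a ≠ 1
    have hs : a ⬝ᵥ a - 1 ≠ 0 := by
      intro hs0
      have haa : (∑ k, a k * a k) = 1 := by
        have : a ⬝ᵥ a = 1 := by linarith
        simpa [dotProduct] using this
      have hrest : (∑ k ∈ Finset.univ.erase i, a k * a k) = 0 := by
        have h2 : a i * a i + ∑ x ∈ Finset.univ.erase i, a x * a x = 1 := by
          simpa [haa] using Finset.add_sum_erase Finset.univ (fun k => a k * a k)
            (Finset.mem_univ i)
        rw [hai] at h2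
        linarith
      have hzero : ∀ k, k ≠ i → a k = 0 := by
        intro k hk
        have hnn : ∀ m ∈ Finset.univ.erase i, 0 ≤ a m * a m := fun m _ => mul_self_nonneg _
        have := (Finset.sum_eq_zero_iff_of_nonneg hnn).1 hrest k
          (Finset.mem_erase.2 ⟨hk, Finset.mem_univ k⟩)
        nlinarith [this]
      have : a ⬝ᵥ b = a i * b i := by
        rw [dotProduct]
        exact Finset.sum_eq_single i (fun k _ hk => by rw [hzero k hk, zero_mul]) (by simp)
      rw [hab, hai, hbj, one_mul] at this
      exact one_ne_zero this.symm
    set s : ℝ := a ⬝ᵥ a - 1 with hs_def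
    -- auxiliary vector a' = a - e_i, with a' i = 0 and a ⬝ᵥ a' = s
    set a' : Fin (n+2) → ℝ := a - (Pi.single i 1 : Fin (n+2) → ℝ) with ha'_def
    have ha'i : a' i = 0 := by simp [ha'_def, hai]
    have haa' : a ⬝ᵥ a' = s := by
      simp [ha'_def, dotProduct_sub, dotProduct_single, hai, hs_def]
    have hva' : v ⬝ᵥ a' = v ⬝ᵥ a := by
      simp [ha'_def, dotProduct_sub, dotProduct_single, hvi]
    have hba' : b ⬝ᵥ a' = -1 := by
      have : b ⬝ᵥ a = 0 := by rw [dotProduct_comm]; exact hab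
      simp [ha'_def, dotProduct_sub, dotProduct_single, this, hbj]
    -- step 1 : v ⬝ᵥ a = 0, using w₂ = (b - e_i) + (1/s) • a'
    have hva : v ⬝ᵥ a = 0 := by
      have hw2 := h ((b - (Pi.single i 1 : Fin (n+2) → ℝ)) + (1/s) • a') ?_ ?_
      · rw [dotProduct_add, dotProduct_sub, dotProduct_single, dotProduct_smul,
          hvi, smul_eq_mul, hva'] at hw2
        have hvb : v ⬝ᵥ b = 0 := by rw [dotProduct_comm]; exact hbv
        rw [hvb] at hw2
        have : (1/s) * (v ⬝ᵥ a) = 0 := by linarith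
        rcases mul_eq_zero.1 this with h1 | h2
        · exact absurd h1 (one_div_ne_zero hs)
        · exact h2
      · simp [Pi.add_apply, Pi.sub_apply, Pi.smul_apply, hbj, ha'i]
      · rw [dotProduct_add, dotProduct_sub, dotProduct_single, dotProduct_smul,
          hai, hab, haa', smul_eq_mul]
        field_simp
        ring
    -- step 2 : v ⬝ᵥ v = 0, using w₁ = v - ((a ⬝ᵥ v)/s) • a'
    have havc : a ⬝ᵥ v = 0 := by rw [dotProduct_comm]; exact hva
    have hw1 := h (v - ((a ⬝ᵥ v)/s) • a') ?_ ?_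
    · rw [dotProduct_sub, dotProduct_smul, smul_eq_mul, hva', hva, havc] at hw1
      simp only [zero_div, zero_mul, sub_zero] at hw1
      exact hv ((dotProduct_self_eq_zero).1 hw1)
    · simp [Pi.sub_apply, Pi.smul_apply, hvi, ha'i]
    · rw [dotProduct_sub, dotProduct_smul, smul_eq_mul, haa', havc]
      simp
  · -- case i ≠ j
    have hm : ∀ m, m ≠ j → v m = 0 := by
      intro m hmj
      have hw := h ((Pi.single m 1 : Fin (n+2) → ℝ) - a m • (Pi.single i 1 : Fin (n+2) → ℝ)) ?_ ?_
      · rw [dotProduct_sub, dotProduct_smul, dotProduct_single, dotProduct_single,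
          smul_eq_mul, hvi] at hw
        simpa using hw
      · simp [Pi.sub_apply, Pi.smul_apply, Pi.single_apply, Ne.symm hmj, Ne.symm hij]
      · rw [dotProduct_sub, dotProduct_smul, dotProduct_single, dotProduct_single,
          smul_eq_mul, hai]
        ring
    have hvj : v j = 0 := by
      have : b ⬝ᵥ v = b j * v j := by
        rw [dotProduct]
        exact Finset.sum_eq_single j (fun k _ hk => by rw [hm k hk, mul_zero]) (by simp)
      rw [hbv, hbj, one_mul] at this
      exact this.symm
    exact hv (funext fun m => by
      rcases eq_or_ne m j with rfl | hmj
      · exact hvj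
      · exact hm m hmj)

/-- On the affine chart {xⁱ = 1, yʲ = 1} of the incidence variety C̃ = {x·y = 0}, the
    pullback s_{i,j}^* ω of ω = Σ(xᵏ dyᵏ - yᵏ dxᵏ) is a contact form at every point:
    equivalently (to the nonvanishing of s_{i,j}^*(ω ∧ (dω)^n)), on the tangent space
    T of the chart, ω is a nonzero linear functional and dω = 2Σ dxᵏ∧dyᵏ is
    nondegenerate on T ∩ ker ω. -/
theorem stmt18 (n : ℕ) (i j : Fin (n+2))
    (a b : Fin (n+2) → ℝ) (hai : a i = 1) (hbj : b j = 1) (hab : a ⬝ᵥ b = 0)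
    (T : Set ((Fin (n+2) → ℝ) × (Fin (n+2) → ℝ)))
    (hT : T = {vw | vw.1 i = 0 ∧ vw.2 j = 0 ∧ vw.1 ⬝ᵥ b + a ⬝ᵥ vw.2 = 0})
    (α : (Fin (n+2) → ℝ) × (Fin (n+2) → ℝ) → ℝ)
    (hα : α = fun vw => a ⬝ᵥ vw.2 - b ⬝ᵥ vw.1)
    (β : (Fin (n+2) → ℝ) × (Fin (n+2) → ℝ) → (Fin (n+2) → ℝ) × (Fin (n+2) → ℝ) → ℝ)
    (hβ : β = fun vw vw' => 2 * (vw.1 ⬝ᵥ vw'.2 - vw'.1 ⬝ᵥ vw.2)) :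
    (∃ vw ∈ T, α vw ≠ 0) ∧
    (∀ vw ∈ T, α vw = 0 → vw ≠ 0 → ∃ vw' ∈ T, α vw' = 0 ∧ β vw vw' ≠ 0) := by
  subst hT hα hβ
  constructor
  · -- ω is a nonzero functional on T
    rcases eq_or_ne i j with hij | hij
    · -- i = j : find k ≠ i with a k * b k ≠ 0
      subst hij
      have hrest : (∑ k ∈ Finset.univ.erase i, a k * b k) = -1 := by
        have h0 : (∑ k, a k * b k) = 0 := by simpa [dotProduct] using hab
        have h2 : a i * b i + ∑ x ∈ Finset.univ.erase i, a x * b x = 0 := by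
          simpa [h0] using Finset.add_sum_erase Finset.univ (fun k => a k * b k)
            (Finset.mem_univ i)
        rw [hai, hbj] at h2
        linarith
      have hex : ∃ k ∈ Finset.univ.erase i, a k * b k ≠ 0 := by
        by_contra hc
        push_neg at hc
        rw [Finset.sum_eq_zero hc] at hrest
        norm_num at hrest
      obtain ⟨k, hk, hakbk⟩ := hex
      have hki : k ≠ i := (Finset.mem_erase.1 hk).1
      have hak : a k ≠ 0 := fun h0 => hakbk (by rw [h0, zero_mul])
      have hbk : b k ≠ 0 := fun h0 => hakbk (by rw [h0, mul_zero])
      refine ⟨((Pi.single k 1 : Fin (n+2) → ℝ), -((b k / a k) • (Pi.single k 1 : Fin (n+2) → ℝ))), ⟨?_, ?_, ?_⟩, ?_⟩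
      · simp [Pi.single_apply, Ne.symm hki]
      · simp [Pi.single_apply, Ne.symm hki]
      · simp only [dotProduct_neg, dotProduct_smul, single_dotProduct, dotProduct_single,
          smul_eq_mul, one_mul]
        field_simp
        ring
      · simp only [dotProduct_neg, dotProduct_smul, single_dotProduct, dotProduct_single,
          smul_eq_mul, one_mul]
        have : b k / a k * (a k * 1) = b k := by field_simp
        rw [this]
        intro hcon
        apply hbk
        linarith
    · -- i ≠ j : take (e_j, -e_i)
      refine ⟨(Pi.single j (1:ℝ), -(Pi.single i (1:ℝ))), ⟨?_, ?_, ?_⟩, ?_⟩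
      · simp [Pi.single_apply, hij]
      · simp [Pi.single_apply, Ne.symm hij]
      · simp [single_dotProduct, dotProduct_single, hai, hbj]
      · simp [single_dotProduct, dotProduct_single, hai, hbj]
        norm_num
  · -- nondegeneracy of dω on T ∩ ker ω
    rintro ⟨v, w⟩ ⟨hvi, hwj, hsum⟩ hαvw hne
    simp only at hvi hwj hsum
    simp only at hαvw
    have hcm : v ⬝ᵥ b = b ⬝ᵥ v := dotProduct_comm _ _
    have hvb : v ⬝ᵥ b = 0 := by linarith
    have hbv : b ⬝ᵥ v = 0 := by rw [dotProduct_comm]; exact hvb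
    have haw : a ⬝ᵥ w = 0 := by linarith
    have hvw : v ≠ 0 ∨ w ≠ 0 := by
      by_contra hc
      push_neg at hc
      exact hne (Prod.ext hc.1 hc.2)
    rcases hvw with hv | hw
    · obtain ⟨w', hw'j, haw', hvw'⟩ := key_lemma n i j a b v hai hbj hab hvi hbv hv
      refine ⟨(0, w'), ⟨?_, ?_, ?_⟩, ?_, ?_⟩
      · simp
      · exact hw'j
      · simp [haw']
      · simp [haw']
      · simpa using hvw'
    · have hba : b ⬝ᵥ a = 0 := by rw [dotProduct_comm]; exact hab
      obtain ⟨v', hv'i, hbv', hwv'⟩ := key_lemma n j i b a w hbj hai hba hwj haw hw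
      refine ⟨(v', 0), ⟨?_, ?_, ?_⟩, ?_, ?_⟩
      · exact hv'i
      · simp
      · rw [show v' ⬝ᵥ b = b ⬝ᵥ v' from dotProduct_comm _ _, hbv']; simp
      · simp only [dotProduct_zero]
        rw [show b ⬝ᵥ v' = 0 from hbv']
        ring
      · have : v' ⬝ᵥ w ≠ 0 := by rw [dotProduct_comm]; exact hwv'
        simp only [dotProduct_zero, zero_sub]
        intro hcon
        apply this
        linarith
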